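/- For every alphabet 𝓐 and every finite logical matrix M for 𝓐 (i.e., one whose set of truth values is finite), the logic (𝓐, ⊨_M) is finitary: if Γ ⊨_M Δ then there exist finite subsets Γ' ⊆ Γ and Δ' ⊆ Δ with Γ' ⊨_M Δ'. -/

import Mathlib

namespace BDPaper

/-- An alphabet of a propositional language: a countably infinite set of
propositional variables and, for each arity `n`, a finite set of `n`-ary
connectives (the sets being pairwise disjoint, which is automatic for types),
whose union is nonempty and finite. -/
structure Alphabet : Type 1 where
  PVar : Type
  Conn : ℕ → Type
  pvar_countable : Countable PVar
  pvar_infinite : Infinite PVar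
  conn_finite : ∀ n, Finite (Conn n)
  conn_nonempty : ∃ n, Nonempty (Conn n)
  conn_bounded : ∃ N, ∀ n, N ≤ n → IsEmpty (Conn n)

/-- Formulas over an alphabet. -/
inductive Formula (𝓐 : Alphabet) : Type where
  | var : 𝓐.PVar → Formula 𝓐
  | app : {n : ℕ} → 𝓐.Conn n → (Fin n → Formula 𝓐) → Formula 𝓐

/-- A logical matrix for an alphabet `𝓐`: a nonempty set of truth values `V`,
a nonempty proper subset `D` of designated values, and an interpretation of each
`n`-ary connective as an `n`-ary function on `V`. -/
structure Matrix' (𝓐 : Alphabet) : Type 1 where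
  V : Type
  D : Set V
  I : (n : ℕ) → 𝓐.Conn n → (Fin n → V) → V
  v_nonempty : Nonempty V
  d_nonempty : D.Nonempty
  d_proper : D ≠ Set.univ

/-- A valuation in a matrix: a function from formulas to truth values commuting
with the interpretations of the connectives. -/
def IsValuation {𝓐 : Alphabet} (M : Matrix' 𝓐) (ν : Formula 𝓐 → M.V) : Prop :=
  ∀ (n : ℕ) (c : 𝓐.Conn n) (args : Fin n → Formula 𝓐),
    ν (Formula.app c args) = M.I n c (fun i => ν (args i))

/-- The consequence relation induced by a matrix: `Γ ⊨_M Δ` iff every valuation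
giving every formula of `Γ` a designated value gives some formula of `Δ`
a designated value. -/
def Con {𝓐 : Alphabet} (M : Matrix' 𝓐) (Γ Δ : Set (Formula 𝓐)) : Prop :=
  ∀ ν : Formula 𝓐 → M.V, IsValuation M ν →
    (∀ A ∈ Γ, ν A ∈ M.D) → ∃ B ∈ Δ, ν B ∈ M.D

/-- Homomorphic extension of a substitution to all formulas. -/
def subst {𝓐 : Alphabet} (σ : 𝓐.PVar → Formula 𝓐) : Formula 𝓐 → Formula 𝓐
  | .var p => σ p
  | .app c args => .app c (fun i => subst σ (args i))

/-- The set of propositional variables occurring in a formula. -/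
def fvars {𝓐 : Alphabet} : Formula 𝓐 → Set 𝓐.PVar
  | .var p => {p}
  | .app _ args => ⋃ i, fvars (args i)

/-- the logic induced by a finite matrix is finitary. -/
theorem stmt1 (𝓐 : Alphabet) (M : Matrix' 𝓐) (hfin : Finite M.V) :
    ∀ Γ Δ : Set (Formula 𝓐), Con M Γ Δ →
      ∃ Γ' Δ' : Set (Formula 𝓐),
        Γ' ⊆ Γ ∧ Δ' ⊆ Δ ∧ Γ'.Finite ∧ Δ'.Finite ∧ Con M Γ' Δ' := by
  intro Γ Δ hCon
  classical
  by_contra h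
  push_neg at h
  have := hfin
  -- For every finite pair there is a counterexample valuation
  have hall : ∀ p : Finset Γ × Finset Δ,
      ∃ ν : Formula 𝓐 → M.V, IsValuation M ν ∧ (∀ A ∈ p.1, ν A.1 ∈ M.D) ∧
        ∀ B ∈ p.2, ν B.1 ∉ M.D := by
    intro p
    have hnc := h (Subtype.val '' (p.1 : Set Γ)) (Subtype.val '' (p.2 : Set Δ))
      (by rintro _ ⟨a, _, rfl⟩; exact a.2) (by rintro _ ⟨a, _, rfl⟩; exact a.2)
      (p.1.finite_toSet.image _) (p.2.finite_toSet.image _)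
    unfold Con at hnc
    push_neg at hnc
    obtain ⟨ν, hval, hmem, hne⟩ := hnc
    exact ⟨ν, hval, fun A hA => hmem _ ⟨A, hA, rfl⟩, fun B hB => hne _ ⟨B, hB, rfl⟩⟩
  set P := Finset Γ × Finset Δ with hP
  let νp : P → Formula 𝓐 → M.V := fun p => (hall p).choose
  have hνp : ∀ p : P, IsValuation M (νp p) ∧ (∀ A ∈ p.1, νp p A.1 ∈ M.D) ∧
      ∀ B ∈ p.2, νp p B.1 ∉ M.D := fun p => (hall p).choose_spec
  haveI : (Filter.atTop : Filter P).NeBot := Filter.atTop_neBot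
  obtain ⟨U, hU⟩ := Ultrafilter.exists_le (Filter.atTop : Filter P)
  -- limits along the ultrafilter exist since M.V is finite
  have hlim : ∀ f : P → M.V, ∃ x, ∀ᶠ p in (U : Filter P), f p = x := by
    intro f
    by_contra hc
    push_neg at hc
    have h1 : ∀ x : M.V, ∀ᶠ p in (U : Filter P), f p ≠ x := fun x =>
      hc x
    have h2 : ∀ᶠ p in (U : Filter P), ∀ x : M.V, f p ≠ x :=
      Filter.eventually_all.2 h1
    obtain ⟨p, hp⟩ := h2.exists
    exact hp (f p) rfl
  let ν : Formula 𝓐 → M.V := fun A => (hlim (fun p => νp p A)).choose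
  have hν : ∀ A, ∀ᶠ p in (U : Filter P), νp p A = ν A :=
    fun A => (hlim (fun p => νp p A)).choose_spec
  have hval : IsValuation M ν := by
    intro n c args
    have h1 := hν (Formula.app c args)
    have h2 : ∀ᶠ p in (U : Filter P), ∀ i : Fin n, νp p (args i) = ν (args i) :=
      Filter.eventually_all.2 (fun i => hν (args i))
    obtain ⟨p, hp1, hp2⟩ := (h1.and h2).exists
    rw [← hp1, (hνp p).1 n c args]
    congr 1
    funext i
    rw [hp2 i]
  have hΓ : ∀ A ∈ Γ, ν A ∈ M.D := by
    intro A hA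
    have hup : ∀ᶠ p in (U : Filter P), (⟨A, hA⟩ : Γ) ∈ p.1 := by
      have hge : ∀ᶠ p : P in Filter.atTop,
          (({⟨A, hA⟩} : Finset Γ), (∅ : Finset Δ)) ≤ p := Filter.eventually_ge_atTop _
      exact (hge.filter_mono hU).mono fun p hp => hp.1 (Finset.mem_singleton_self _)
    obtain ⟨p, hp1, hp2⟩ := ((hν A).and hup).exists
    rw [← hp1]
    exact (hνp p).2.1 ⟨A, hA⟩ hp2
  have hΔ : ∀ B ∈ Δ, ν B ∉ M.D := by
    intro B hB
    have hup : ∀ᶠ p in (U : Filter P), (⟨B, hB⟩ : Δ) ∈ p.2 := by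
      have hge : ∀ᶠ p : P in Filter.atTop,
          ((∅ : Finset Γ), ({⟨B, hB⟩} : Finset Δ)) ≤ p := Filter.eventually_ge_atTop _
      exact (hge.filter_mono hU).mono fun p hp => hp.2 (Finset.mem_singleton_self _)
    obtain ⟨p, hp1, hp2⟩ := ((hν B).and hup).exists
    rw [← hp1]
    exact (hνp p).2.2 ⟨B, hB⟩ hp2
  obtain ⟨B, hB, hBD⟩ := hCon ν hval hΓ
  exact hΔ B hB hBD

end BDPaper
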